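/- Under second-order differentiability of the forms (existence of bounded Ä_t, B̈_t with uniform second-order Taylor expansions of A_{t+h}, B_{t+h}), the second difference quotient of the eigenvalue converges: (2/h_ℓ²)(λ_j(t+h_ℓ) − λ_j(t) − h_ℓ λ̇_j^*) → λ̈_j^* with λ̈_j^* = (Ä_t − λ B̈_t − 2λ̇_j^* Ḃ_t)(φ_j, φ_j) − 2 C_t(z_*^j, z_*^j). -/

import Mathlib

open Filter Topology RealInnerProductSpace

set_option maxHeartbeats 1000000

section hadamardHelpers

variable {E F : Type*} [NormedAddCommGroup E] [NormedSpace ℝ E]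
  [NormedAddCommGroup F] [NormedSpace ℝ F]

lemma bilin_scale (Φ : E →ₗ[ℝ] F →ₗ[ℝ] ℝ) (c : ℝ)
    (hb : ∀ u v, ‖u‖ ≤ 1 → ‖v‖ ≤ 1 → |Φ u v| ≤ c) :
    ∀ u v, |Φ u v| ≤ c * (‖u‖ * ‖v‖) := by
  have hc : 0 ≤ c := by simpa using hb 0 0 (by simp) (by simp)
  intro u v
  rcases eq_or_ne u 0 with rfl | hu
  · simp
  rcases eq_or_ne v 0 with rfl | hv
  · simp
  have hnu : (0:ℝ) < ‖u‖ := norm_pos_iff.2 hu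
  have hnv : (0:ℝ) < ‖v‖ := norm_pos_iff.2 hv
  have h1 : |Φ (‖u‖⁻¹ • u) (‖v‖⁻¹ • v)| ≤ c := by
    apply hb <;>
      simp [norm_smul, abs_of_pos, hnu, hnv, inv_mul_cancel₀ hnu.ne', inv_mul_cancel₀ hnv.ne']
  have h2 : Φ (‖u‖⁻¹ • u) (‖v‖⁻¹ • v) = ‖u‖⁻¹ * (‖v‖⁻¹ * Φ u v) := by
    simp [LinearMap.map_smul, smul_eq_mul]; ring
  rw [h2, abs_mul, abs_mul, abs_inv, abs_inv, abs_of_pos hnu, abs_of_pos hnv] at h1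
  have h3 := mul_le_mul_of_nonneg_left h1 (by positivity : (0:ℝ) ≤ ‖u‖ * ‖v‖)
  calc |Φ u v| = ‖u‖ * ‖v‖ * (‖u‖⁻¹ * (‖v‖⁻¹ * |Φ u v|)) := by field_simp
    _ ≤ ‖u‖ * ‖v‖ * c := h3
    _ = c * (‖u‖ * ‖v‖) := by ring

lemma bilin_tendsto {ι' : Type*} (Φ : E →ₗ[ℝ] F →ₗ[ℝ] ℝ) (C : ℝ)
    (hb : ∀ u v, |Φ u v| ≤ C * ‖u‖ * ‖v‖) {l : Filter ι'} {a : ι' → E} {b : ι' → F}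
    {a₀ : E} {b₀ : F} (ha : Filter.Tendsto a l (𝓝 a₀)) (hbt : Filter.Tendsto b l (𝓝 b₀)) :
    Filter.Tendsto (fun i => Φ (a i) (b i)) l (𝓝 (Φ a₀ b₀)) := by
  have habs : ∀ u v, |Φ u v| ≤ |C| * ‖u‖ * ‖v‖ := fun u v =>
    le_trans (hb u v) (mul_le_mul_of_nonneg_right
      (mul_le_mul_of_nonneg_right (le_abs_self C) (norm_nonneg u)) (norm_nonneg v))
  rw [← tendsto_sub_nhds_zero_iff]
  have h1 : Filter.Tendsto (fun i => ‖a i - a₀‖) l (𝓝 0) := by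
    simpa using (ha.sub (tendsto_const_nhds (x := a₀) (f := l))).norm
  have h2 : Filter.Tendsto (fun i => ‖b i - b₀‖) l (𝓝 0) := by
    simpa using (hbt.sub (tendsto_const_nhds (x := b₀) (f := l))).norm
  apply squeeze_zero_norm
    (a := fun i => |C| * ‖a i - a₀‖ * ‖b i‖ + |C| * ‖a₀‖ * ‖b i - b₀‖)
  · intro i
    have hdec : Φ (a i) (b i) - Φ a₀ b₀ = Φ (a i - a₀) (b i) + Φ a₀ (b i - b₀) := by
      simp [LinearMap.map_sub, LinearMap.sub_apply]
    rw [Real.norm_eq_abs, hdec]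
    exact le_trans (abs_add_le _ _) (add_le_add (habs _ _) (habs _ _))
  · have hg := (((tendsto_const_nhds (x := |C|) (f := l)).mul h1).mul hbt.norm).add
      ((tendsto_const_nhds (x := |C| * ‖a₀‖) (f := l)).mul h2)
    simpa using hg



lemma abs_le_scale2 {v c x y Mx Ny : ℝ} (h : |v| ≤ c * x * y) (hx : x ≤ Mx) (hy : y ≤ Ny)
    (hx0 : 0 ≤ x) (hy0 : 0 ≤ y) : |v| ≤ |c| * Mx * Ny := by
  have hMx : 0 ≤ Mx := le_trans hx0 hx
  calc |v| ≤ c * x * y := h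
    _ ≤ |c| * x * y :=
        mul_le_mul_of_nonneg_right (mul_le_mul_of_nonneg_right (le_abs_self c) hx0) hy0
    _ ≤ |c| * Mx * y :=
        mul_le_mul_of_nonneg_right (mul_le_mul_of_nonneg_left hx (abs_nonneg c)) hy0
    _ ≤ |c| * Mx * Ny := mul_le_mul_of_nonneg_left hy (by positivity)

lemma rem_tendsto (G : ℝ → E →ₗ[ℝ] F →ₗ[ℝ] ℝ) (t : ℝ) (G1 G2 : E →ₗ[ℝ] F →ₗ[ℝ] ℝ)
    (hT : ∀ ε > (0:ℝ), ∃ η > (0:ℝ), ∀ h : ℝ, h ≠ 0 → |h| < η → ∀ u v, ‖u‖ ≤ 1 → ‖v‖ ≤ 1 →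
      |G (t + h) u v - G t u v - h * G1 u v - h ^ 2 / 2 * G2 u v| ≤ ε * h ^ 2)
    (hs : ℕ → ℝ) (hs0 : ∀ ℓ, hs ℓ ≠ 0) (hsl : Filter.Tendsto hs Filter.atTop (𝓝 0))
    {a : ℕ → E} {a₀ : E} (ha : Filter.Tendsto a Filter.atTop (𝓝 a₀)) (v : F) :
    Filter.Tendsto (fun ℓ => (G (t + hs ℓ) (a ℓ) v - G t (a ℓ) v - hs ℓ * G1 (a ℓ) v
      - (hs ℓ) ^ 2 / 2 * G2 (a ℓ) v) / (hs ℓ) ^ 2) Filter.atTop (𝓝 0) := by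
  rw [Metric.tendsto_nhds]
  intro ε hε
  set D : ℝ := (‖a₀‖ + 1) * (‖v‖ + 1) with hD
  have hDpos : 0 < D := by positivity
  have hε' : 0 < ε / (2 * D) := by positivity
  obtain ⟨η, hη, hTa⟩ := hT (ε / (2 * D)) hε'
  have E1 : ∀ᶠ ℓ in Filter.atTop, |hs ℓ| < η := by
    have := Metric.tendsto_nhds.1 hsl η hη
    filter_upwards [this] with ℓ hd
    rwa [Real.dist_0_eq_abs] at hd
  have E2 : ∀ᶠ ℓ in Filter.atTop, ‖a ℓ‖ ≤ ‖a₀‖ + 1 :=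
    ha.norm.eventually_le_const (lt_add_one _)
  filter_upwards [E1, E2] with ℓ h1 h2
  rw [Real.dist_0_eq_abs]
  set h := hs ℓ
  have hh : h ≠ 0 := hs0 ℓ
  have hsq : (0:ℝ) < h ^ 2 := by positivity
  set Φ : E →ₗ[ℝ] F →ₗ[ℝ] ℝ := G (t + h) - G t - h • G1 - (h ^ 2 / 2) • G2 with hΦ
  have happ : ∀ u w, Φ u w = G (t + h) u w - G t u w - h * G1 u w - h ^ 2 / 2 * G2 u w := by
    intro u w; simp [hΦ, LinearMap.sub_apply, LinearMap.smul_apply, smul_eq_mul]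
  have hbound := bilin_scale Φ (ε / (2 * D) * h ^ 2) (by
    intro u w hu hw
    rw [happ]
    exact hTa h hh h1 u w hu hw)
  have hnum : |Φ (a ℓ) v| ≤ ε / (2 * D) * h ^ 2 * (‖a ℓ‖ * ‖v‖) := hbound (a ℓ) v
  rw [happ] at hnum
  rw [abs_div, abs_pow, sq_abs]
  rw [div_lt_iff₀ hsq]
  calc |G (t + h) (a ℓ) v - G t (a ℓ) v - h * G1 (a ℓ) v - h ^ 2 / 2 * G2 (a ℓ) v|
      ≤ ε / (2 * D) * h ^ 2 * (‖a ℓ‖ * ‖v‖) := hnum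
    _ ≤ ε / (2 * D) * h ^ 2 * D := by
        apply mul_le_mul_of_nonneg_left _ (by positivity)
        have hv : ‖v‖ ≤ ‖v‖ + 1 := by linarith
        have := mul_le_mul h2 hv (norm_nonneg v) (by positivity)
        linarith
    _ = ε / 2 * h ^ 2 := by field_simp
    _ < ε * h ^ 2 := by nlinarith


lemma quot_tendsto (G : ℝ → E →ₗ[ℝ] F →ₗ[ℝ] ℝ) (t : ℝ) (G1 G2 : E →ₗ[ℝ] F →ₗ[ℝ] ℝ)
    (C1 C2 : ℝ) (hb1 : ∀ u v, |G1 u v| ≤ C1 * ‖u‖ * ‖v‖) (hb2 : ∀ u v, |G2 u v| ≤ C2 * ‖u‖ * ‖v‖)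
    (hT : ∀ ε > (0:ℝ), ∃ η > (0:ℝ), ∀ h : ℝ, h ≠ 0 → |h| < η → ∀ u v, ‖u‖ ≤ 1 → ‖v‖ ≤ 1 →
      |G (t + h) u v - G t u v - h * G1 u v - h ^ 2 / 2 * G2 u v| ≤ ε * h ^ 2)
    (hs : ℕ → ℝ) (hs0 : ∀ ℓ, hs ℓ ≠ 0) (hsl : Filter.Tendsto hs Filter.atTop (𝓝 0))
    {a : ℕ → E} {a₀ : E} (ha : Filter.Tendsto a Filter.atTop (𝓝 a₀)) (v : F) :
    Filter.Tendsto (fun ℓ => (G (t + hs ℓ) (a ℓ) v - G t (a ℓ) v) / hs ℓ)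
      Filter.atTop (𝓝 (G1 a₀ v)) := by
  have key : Filter.Tendsto (fun ℓ => G1 (a ℓ) v + hs ℓ / 2 * G2 (a ℓ) v
      + hs ℓ * ((G (t + hs ℓ) (a ℓ) v - G t (a ℓ) v - hs ℓ * G1 (a ℓ) v
        - (hs ℓ) ^ 2 / 2 * G2 (a ℓ) v) / (hs ℓ) ^ 2)) Filter.atTop (𝓝 (G1 a₀ v)) := by
    have t1 := bilin_tendsto G1 C1 hb1 ha (tendsto_const_nhds (x := v) (f := Filter.atTop))
    have t2 := bilin_tendsto G2 C2 hb2 ha (tendsto_const_nhds (x := v) (f := Filter.atTop))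
    have t3 := rem_tendsto G t G1 G2 hT hs hs0 hsl ha v
    have := (t1.add (((hsl.div_const 2)).mul t2)).add (hsl.mul t3)
    simpa using this
  apply key.congr
  intro ℓ
  have hh : hs ℓ ≠ 0 := hs0 ℓ
  field_simp
  ring

set_option maxHeartbeats 1000000 in
lemma deriv_symm (G : ℝ → E →ₗ[ℝ] E →ₗ[ℝ] ℝ) (t : ℝ) (G1 G2 : E →ₗ[ℝ] E →ₗ[ℝ] ℝ)
    (C2 : ℝ) (hb2 : ∀ u v, |G2 u v| ≤ C2 * ‖u‖ * ‖v‖)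
    (hT : ∀ ε > (0:ℝ), ∃ η > (0:ℝ), ∀ h : ℝ, h ≠ 0 → |h| < η → ∀ u v, ‖u‖ ≤ 1 → ‖v‖ ≤ 1 →
      |G (t + h) u v - G t u v - h * G1 u v - h ^ 2 / 2 * G2 u v| ≤ ε * h ^ 2)
    (hGsymm : ∀ s u v, G s u v = G s v u) :
    ∀ u v, G1 u v = G1 v u := by
  intro u v
  have habs : ∀ ε > (0:ℝ), |G1 u v - G1 v u| ≤ ε := by
    intro ε hε
    set D : ℝ := ‖u‖ * ‖v‖ with hD
    have hDnn : 0 ≤ D := by positivity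
    obtain ⟨η, hη, hTa⟩ := hT 1 one_pos
    set c : ℝ := 2 * D + |C2| * D + 1 with hc
    have hcpos : 0 < c := by positivity
    set h : ℝ := min η (ε / c) / 2 with hhdef
    have hεc : 0 < ε / c := by positivity
    have hhpos : 0 < h := div_pos (lt_min hη hεc) two_pos
    have hhη : |h| < η := by
      rw [abs_of_pos hhpos, hhdef]
      exact lt_of_lt_of_le (div_lt_self (lt_min hη hεc) one_lt_two) (min_le_left _ _)
    have hhε : h ≤ ε / c / 2 := by
      rw [hhdef]; gcongr; exact min_le_right _ _
    set Φ : E →ₗ[ℝ] E →ₗ[ℝ] ℝ := G (t + h) - G t - h • G1 - (h ^ 2 / 2) • G2 with hΦ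
    have happ : ∀ x y, Φ x y = G (t + h) x y - G t x y - h * G1 x y - h ^ 2 / 2 * G2 x y := by
      intro x y; simp [hΦ, LinearMap.sub_apply, LinearMap.smul_apply, smul_eq_mul]
    have hbound := bilin_scale Φ (1 * h ^ 2) (by
      intro x y hx hy
      rw [happ]
      exact hTa h hhpos.ne' hhη x y hx hy)
    -- name the relevant real numbers
    have h1 : |Φ u v| ≤ h ^ 2 * D := by
      have h0 := hbound u v
      rw [hD]; rw [one_mul] at h0; linarith [h0]
    have h2 : |Φ v u| ≤ h ^ 2 * D := by
      have h0 := hbound v u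
      rw [one_mul] at h0
      have : ‖v‖ * ‖u‖ = D := by rw [hD]; ring
      rw [this] at h0; linarith
    have hΦdiff : Φ v u - Φ u v = h * (G1 u v - G1 v u) + h ^ 2 / 2 * (G2 u v - G2 v u) := by
      rw [happ, happ, hGsymm (t + h) u v, hGsymm t u v]
      ring
    set d : ℝ := G1 u v - G1 v u with hd
    set e : ℝ := G2 u v - G2 v u with he
    have hG2uv : |G2 u v| ≤ |C2| * D := by
      have h0 := hb2 u v
      have h1 : C2 * ‖u‖ * ‖v‖ ≤ |C2| * ‖u‖ * ‖v‖ :=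
        mul_le_mul_of_nonneg_right
          (mul_le_mul_of_nonneg_right (le_abs_self C2) (norm_nonneg u)) (norm_nonneg v)
      have h2 : |C2| * ‖u‖ * ‖v‖ = |C2| * D := by rw [hD]; ring
      linarith
    have hG2vu : |G2 v u| ≤ |C2| * D := by
      have h0 := hb2 v u
      have h1 : C2 * ‖v‖ * ‖u‖ ≤ |C2| * ‖v‖ * ‖u‖ :=
        mul_le_mul_of_nonneg_right
          (mul_le_mul_of_nonneg_right (le_abs_self C2) (norm_nonneg v)) (norm_nonneg u)
      have h2 : |C2| * ‖v‖ * ‖u‖ = |C2| * D := by rw [hD]; ring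
      linarith
    have hG2d : |e| ≤ 2 * (|C2| * D) := by
      calc |e| ≤ |G2 u v| + |G2 v u| := abs_sub _ _
        _ ≤ 2 * (|C2| * D) := by linarith
    have hsum : |h * d + h ^ 2 / 2 * e| ≤ 2 * (h ^ 2 * D) := by
      rw [← hΦdiff]
      calc |Φ v u - Φ u v| ≤ |Φ v u| + |Φ u v| := abs_sub _ _
        _ ≤ 2 * (h ^ 2 * D) := by linarith
    have hhd : |h * d| ≤ 2 * (h ^ 2 * D) + h ^ 2 / 2 * (2 * (|C2| * D)) := by
      have t1 : |h * d| ≤ |h * d + h ^ 2 / 2 * e| + |h ^ 2 / 2 * e| := by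
        have := abs_add_le (h * d + h ^ 2 / 2 * e) (-(h ^ 2 / 2 * e))
        simpa using this
      have t2 : |h ^ 2 / 2 * e| ≤ h ^ 2 / 2 * (2 * (|C2| * D)) := by
        rw [abs_mul, abs_of_nonneg (by positivity : (0:ℝ) ≤ h ^ 2 / 2)]
        exact mul_le_mul_of_nonneg_left hG2d (by positivity)
      linarith
    have hdle : |d| ≤ h * (2 * D + |C2| * D) := by
      rw [abs_mul, abs_of_pos hhpos] at hhd
      have h4 : h * |d| ≤ h * (h * (2 * D + |C2| * D)) := by nlinarith [sq_nonneg h]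
      exact le_of_mul_le_mul_left h4 hhpos
    have hfin : h * (2 * D + |C2| * D) ≤ ε / 2 := by
      have hcc : 2 * D + |C2| * D ≤ c := by rw [hc]; linarith
      have := mul_le_mul hhε hcc (by positivity) (by positivity)
      have heq : ε / c / 2 * c = ε / 2 := by field_simp
      linarith [heq ▸ this]
    linarith
  have h0 : |G1 u v - G1 v u| ≤ 0 := by
    by_contra hcon
    push_neg at hcon
    have := habs (|G1 u v - G1 v u| / 2) (by linarith)
    linarith
  have := abs_nonpos_iff.mp h0
  linarith [sub_eq_zero.mp this]



end hadamardHelpers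

section hadamardHilbert

variable {V : Type*} [NormedAddCommGroup V] [InnerProductSpace ℝ V] [CompleteSpace V]
variable {X : Type*} [NormedAddCommGroup X] [InnerProductSpace ℝ X] [CompleteSpace X]



variable {V : Type*} [NormedAddCommGroup V] [InnerProductSpace ℝ V] [CompleteSpace V]
variable {X : Type*} [NormedAddCommGroup X] [InnerProductSpace ℝ X] [CompleteSpace X]

lemma ultra_tendsto_of_bounded (𝒰 : Ultrafilter ℕ) (g : ℕ → ℝ) (K : ℝ)
    (hK : ∀ᶠ ℓ in (𝒰 : Filter ℕ), |g ℓ| ≤ K) :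
    ∃ c : ℝ, |c| ≤ K ∧ Filter.Tendsto g (𝒰 : Filter ℕ) (𝓝 c) := by
  have hcpt : IsCompact (Set.Icc (-K) K) := isCompact_Icc
  have hle : (Ultrafilter.map g 𝒰 : Filter ℝ) ≤ Filter.principal (Set.Icc (-K) K) := by
    rw [Filter.le_principal_iff, Ultrafilter.coe_map, Filter.mem_map]
    filter_upwards [hK] with ℓ h
    exact ⟨neg_le_of_abs_le h, le_of_abs_le h⟩
  obtain ⟨c, hc, hlim⟩ := hcpt.ultrafilter_le_nhds (Ultrafilter.map g 𝒰) hle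
  exact ⟨c, abs_le.2 ⟨neg_le.mp (neg_le.mpr hc.1), hc.2⟩, hlim⟩

lemma ultra_weak_limit (𝒰 : Ultrafilter ℕ) (q : ℕ → V) (K : ℝ)
    (hK : ∀ᶠ ℓ in (𝒰 : Filter ℕ), ‖q ℓ‖ ≤ K) :
    ∃ p : V, ∀ g : V →L[ℝ] ℝ,
      Filter.Tendsto (fun ℓ => g (q ℓ)) (𝒰 : Filter ℕ) (𝓝 (g p)) := by
  have hK' : ∀ᶠ ℓ in (𝒰 : Filter ℕ), ‖q ℓ‖ ≤ max K 0 := by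
    filter_upwards [hK] with ℓ h; exact le_trans h (le_max_left _ _)
  have hlim : ∀ v : V, ∃ c : ℝ, |c| ≤ max K 0 * ‖v‖ ∧
      Filter.Tendsto (fun ℓ => (⟪q ℓ, v⟫ : ℝ)) (𝒰 : Filter ℕ) (𝓝 c) := by
    intro v
    apply ultra_tendsto_of_bounded
    filter_upwards [hK'] with ℓ h
    calc |(⟪q ℓ, v⟫ : ℝ)| ≤ ‖q ℓ‖ * ‖v‖ := abs_real_inner_le_norm _ _
      _ ≤ max K 0 * ‖v‖ := mul_le_mul_of_nonneg_right h (norm_nonneg v)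
  choose L hLb hL using hlim
  have Ladd : ∀ v w : V, L (v + w) = L v + L w := by
    intro v w
    refine tendsto_nhds_unique (hL (v + w)) ?_
    have := (hL v).add (hL w)
    simpa [inner_add_right] using this
  have Lsmul : ∀ (c : ℝ) (v : V), L (c • v) = c * L v := by
    intro c v
    refine tendsto_nhds_unique (hL (c • v)) ?_
    have := (hL v).const_mul c
    simpa [inner_smul_right] using this
  let Lm : V →ₗ[ℝ] ℝ :=
    { toFun := L
      map_add' := Ladd
      map_smul' := Lsmul }
  have hLmb : ∀ v : V, ‖Lm v‖ ≤ max K 0 * ‖v‖ := by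
    intro v; rw [Real.norm_eq_abs]; exact hLb v
  let Lc : V →L[ℝ] ℝ := Lm.mkContinuous (max K 0) hLmb
  refine ⟨(InnerProductSpace.toDual ℝ V).symm Lc, ?_⟩
  intro g
  set y : V := (InnerProductSpace.toDual ℝ V).symm g with hy
  have hgx : ∀ x : V, g x = ⟪x, y⟫ := by
    intro x
    have h1 : (⟪(InnerProductSpace.toDual ℝ V).symm g, x⟫ : ℝ) = g x :=
      InnerProductSpace.toDual_symm_apply
    rw [← hy] at h1
    rw [← h1, real_inner_comm]
  have hval : g ((InnerProductSpace.toDual ℝ V).symm Lc) = L y := by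
    rw [hgx]
    have h1 : (⟪(InnerProductSpace.toDual ℝ V).symm Lc, y⟫ : ℝ) = Lc y :=
      InnerProductSpace.toDual_symm_apply
    rw [h1]
    rfl
  rw [hval]
  have heq : (fun ℓ => g (q ℓ)) = fun ℓ => (⟪q ℓ, y⟫ : ℝ) := by
    funext ℓ; rw [hgx]
  rw [heq]
  exact hL y

lemma ultra_compact_strong (ι : V →L[ℝ] X) (hcompact : IsCompactOperator ι)
    (𝒰 : Ultrafilter ℕ) (q : ℕ → V) (hb : ∀ ℓ, ‖q ℓ‖ ≤ 1) (p : V)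
    (hw : ∀ g : V →L[ℝ] ℝ, Filter.Tendsto (fun ℓ => g (q ℓ)) (𝒰 : Filter ℕ) (𝓝 (g p))) :
    Filter.Tendsto (fun ℓ => ι (q ℓ)) (𝒰 : Filter ℕ) (𝓝 (ι p)) := by
  obtain ⟨K0, hK0c, hK0⟩ := hcompact
  obtain ⟨r, hr, hball⟩ := Metric.mem_nhds_iff.1 hK0
  set s : ℝ := r / 2 with hs
  have hspos : 0 < s := by positivity
  have hmem : ∀ ℓ, ι (s • q ℓ) ∈ K0 := by
    intro ℓ
    apply hball
    rw [Metric.mem_ball, dist_zero_right, norm_smul, Real.norm_eq_abs, abs_of_pos hspos]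
    calc s * ‖q ℓ‖ ≤ s * 1 := mul_le_mul_of_nonneg_left (hb ℓ) hspos.le
      _ < r := by rw [mul_one, hs]; linarith
  have hle : (Ultrafilter.map (fun ℓ => ι (s • q ℓ)) 𝒰 : Filter X) ≤ Filter.principal K0 := by
    rw [Filter.le_principal_iff, Ultrafilter.coe_map, Filter.mem_map]
    exact Filter.univ_mem' hmem
  obtain ⟨x, hxK, hx⟩ := hK0c.ultrafilter_le_nhds _ hle
  have hx' : Filter.Tendsto (fun ℓ => ι (s • q ℓ)) (𝒰 : Filter ℕ) (𝓝 x) := hx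
  have hstrong : Filter.Tendsto (fun ℓ => ι (q ℓ)) (𝒰 : Filter ℕ) (𝓝 (s⁻¹ • x)) := by
    have h1 := hx'.const_smul (s⁻¹)
    simpa [smul_smul, inv_mul_cancel₀ hspos.ne'] using h1
  have hident : s⁻¹ • x = ι p := by
    have hinner : ∀ y : X, (⟪s⁻¹ • x, y⟫ : ℝ) = ⟪ι p, y⟫ := by
      intro y
      have hg : ∀ u : V, (((InnerProductSpace.toDual ℝ X) y).comp ι) u = ⟪y, ι u⟫ := by
        intro u; simp
      have h1 : Filter.Tendsto (fun ℓ => (⟪y, ι (q ℓ)⟫ : ℝ)) (𝒰 : Filter ℕ)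
          (𝓝 (⟪y, ι p⟫ : ℝ)) := by
        have := hw (((InnerProductSpace.toDual ℝ X) y).comp ι)
        simpa [hg] using this
      have h2 : Filter.Tendsto (fun ℓ => (⟪y, ι (q ℓ)⟫ : ℝ)) (𝒰 : Filter ℕ)
          (𝓝 (⟪y, s⁻¹ • x⟫ : ℝ)) :=
        (tendsto_const_nhds (x := y)).inner hstrong
      have h3 := tendsto_nhds_unique h1 h2
      have e1 := real_inner_comm y (s⁻¹ • x)
      have e2 := real_inner_comm y (ι p)
      linarith
    have hz : ∀ y : X, (⟪s⁻¹ • x - ι p, y⟫ : ℝ) = 0 := by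
      intro y
      rw [inner_sub_left, hinner y]
      ring
    have h0 := hz (s⁻¹ • x - ι p)
    rw [real_inner_self_eq_norm_sq] at h0
    have h5 : ‖s⁻¹ • x - ι p‖ = 0 := by nlinarith [norm_nonneg (s⁻¹ • x - ι p)]
    have h6 := norm_eq_zero.mp h5
    exact sub_eq_zero.mp h6
  rw [← hident]
  exact hstrong


end hadamardHilbert

theorem hadamard_stmt14
    {V : Type*} [NormedAddCommGroup V] [InnerProductSpace ℝ V] [CompleteSpace V]
    {X : Type*} [NormedAddCommGroup X] [InnerProductSpace ℝ X] [CompleteSpace X]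
    (ι : V →L[ℝ] X) (hι : Function.Injective ι) (hcompact : IsCompactOperator ι)
    (A : ℝ → V →ₗ[ℝ] V →ₗ[ℝ] ℝ) (B : ℝ → X →ₗ[ℝ] X →ₗ[ℝ] ℝ)
    (hAsymm : ∀ t', ∀ u v : V, A t' u v = A t' v u)
    (hBsymm : ∀ t', ∀ u v : X, B t' u v = B t' v u)
    (CA : ℝ) (hAbdd : ∀ t', ∀ u v : V, |A t' u v| ≤ CA * ‖u‖ * ‖v‖)
    (CB : ℝ) (hBbdd : ∀ t', ∀ u v : X, |B t' u v| ≤ CB * ‖u‖ * ‖v‖)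
    (δ : ℝ) (hδ : 0 < δ)
    (hAcoer : ∀ t', ∀ v : V, δ * ‖v‖ ^ 2 ≤ A t' v v)
    (hBcoer : ∀ t', ∀ v : X, δ * ‖v‖ ^ 2 ≤ B t' v v)
    (t : ℝ)
    -- first derivatives `Ȧ_t`, `Ḃ_t`
    (A' : V →ₗ[ℝ] V →ₗ[ℝ] ℝ) (B' : X →ₗ[ℝ] X →ₗ[ℝ] ℝ)
    (CA' : ℝ) (hA'bdd : ∀ u v : V, |A' u v| ≤ CA' * ‖u‖ * ‖v‖)
    (CB' : ℝ) (hB'bdd : ∀ u v : X, |B' u v| ≤ CB' * ‖u‖ * ‖v‖)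
    -- second derivatives `Ä_t`, `B̈_t`
    (A'' : V →ₗ[ℝ] V →ₗ[ℝ] ℝ) (B'' : X →ₗ[ℝ] X →ₗ[ℝ] ℝ)
    (CA'' : ℝ) (hA''bdd : ∀ u v : V, |A'' u v| ≤ CA'' * ‖u‖ * ‖v‖)
    (CB'' : ℝ) (hB''bdd : ∀ u v : X, |B'' u v| ≤ CB'' * ‖u‖ * ‖v‖)
    -- uniform second-order Taylor expansions
    (hAder2 : ∀ ε > (0:ℝ), ∃ η > (0:ℝ), ∀ h : ℝ, h ≠ 0 → |h| < η →
      ∀ u v : V, ‖u‖ ≤ 1 → ‖v‖ ≤ 1 →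
        |A (t + h) u v - A t u v - h * A' u v - h ^ 2 / 2 * A'' u v| ≤ ε * h ^ 2)
    (hBder2 : ∀ ε > (0:ℝ), ∃ η > (0:ℝ), ∀ h : ℝ, h ≠ 0 → |h| < η →
      ∀ u v : X, ‖u‖ ≤ 1 → ‖v‖ ≤ 1 →
        |B (t + h) u v - B t u v - h * B' u v - h ^ 2 / 2 * B'' u v| ≤ ε * h ^ 2)
    (lam : ℕ → ℝ → ℝ) (u : ℕ → ℝ → V) (j : ℕ)
    (hnorm : ∀ t', B t' (ι (u j t')) (ι (u j t')) = 1)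
    (heig : ∀ t', ∀ v : V, A t' (u j t') v = lam j t' * B t' (ι (u j t')) (ι v))
    (lambda : ℝ) (hlambda : lambda = lam j t)
    (Y : Submodule ℝ V)
    (hYeig : ∀ w : V, w ∈ Y ↔ ∀ v : V, A t w v = lambda * B t (ι w) (ι v))
    (P : V →L[ℝ] V)
    (hPY : ∀ v : V, v - P v ∈ Y)
    (hPorth : ∀ v : V, ∀ y ∈ Y, B t (ι (P v)) (ι y) = 0)
    (hseq : ℕ → ℝ) (hseq0 : ∀ ℓ, hseq ℓ ≠ 0)
    (hseqlim : Filter.Tendsto hseq Filter.atTop (nhds 0))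
    (φ : V) (hφY : φ ∈ Y) (hφnorm : B t (ι φ) (ι φ) = 1)
    (hφlim : Filter.Tendsto (fun ℓ => u j (t + hseq ℓ)) Filter.atTop (nhds φ))
    (lamdot : ℝ)
    (hlamdot : Filter.Tendsto (fun ℓ => (lam j (t + hseq ℓ) - lam j t) / hseq ℓ)
      Filter.atTop (nhds lamdot))
    -- the corrector `z_*^j ∈ PV` solving `C_t(z_*^j, v) = −Ċ_t^{*j}(φ_j, v)` on `V`
    (zstar : V) (hzP : P zstar = zstar)
    (hz : ∀ v : V,
      A t zstar v - lambda * B t (ι zstar) (ι v) =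
        -(A' φ v - lamdot * B t (ι φ) (ι v) - lambda * B' (ι φ) (ι v))) :
    Filter.Tendsto
      (fun ℓ => 2 / (hseq ℓ) ^ 2 * (lam j (t + hseq ℓ) - lam j t - hseq ℓ * lamdot))
      Filter.atTop
      (nhds (A'' φ φ - lambda * B'' (ι φ) (ι φ) - 2 * lamdot * B' (ι φ) (ι φ) -
        2 * (A t zstar zstar - lambda * B t (ι zstar) (ι zstar)))) := by
  classical
  subst hlambda
  -- Notation-free abbreviations appear inline throughout.
  have huu : Filter.Tendsto (fun ℓ => u j (t + hseq ℓ)) Filter.atTop (𝓝 φ) := hφlim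
  have hιuu : Filter.Tendsto (fun ℓ => ι (u j (t + hseq ℓ))) Filter.atTop (𝓝 (ι φ)) :=
    (ι.continuous.tendsto φ).comp huu
  have hγ : Filter.Tendsto (fun ℓ => (lam j (t + hseq ℓ) - lam j t) / hseq ℓ)
      Filter.atTop (𝓝 lamdot) := hlamdot
  have hlm : Filter.Tendsto (fun ℓ => lam j (t + hseq ℓ)) Filter.atTop (𝓝 (lam j t)) := by
    have h1 := hγ.mul hseqlim
    rw [mul_zero] at h1
    have h2 := h1.add_const (lam j t)
    rw [zero_add] at h2
    refine h2.congr fun ℓ => ?_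
    have h3 := div_mul_cancel₀ (lam j (t + hseq ℓ) - lam j t) (hseq0 ℓ)
    linarith
  have hA's : ∀ a b : V, A' a b = A' b a := deriv_symm A t A' A'' CA'' hA''bdd hAder2 hAsymm
  have hB's : ∀ a b : X, B' a b = B' b a := deriv_symm B t B' B'' CB'' hB''bdd hBder2 hBsymm
  have hYφ : ∀ v : V, A t φ v = lam j t * B t (ι φ) (ι v) := (hYeig φ).1 hφY
  -- first-derivative relation on the eigenspace Y
  have hdY : ∀ y ∈ Y, A' φ y = lamdot * B t (ι φ) (ι y) + lam j t * B' (ι φ) (ι y) := by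
    intro y hy
    have quotA := quot_tendsto A t A' A'' CA' CA'' hA'bdd hA''bdd hAder2 hseq hseq0 hseqlim huu y
    have quotB := quot_tendsto B t B' B'' CB' CB'' hB'bdd hB''bdd hBder2 hseq hseq0 hseqlim
      hιuu (ι y)
    have hBt := bilin_tendsto (B t) CB (hBbdd t) hιuu
      (tendsto_const_nhds (x := ι y) (f := Filter.atTop))
    have hRHS := (hlm.mul quotB).add (hγ.mul hBt)
    have hident : ∀ ℓ, (A (t + hseq ℓ) (u j (t + hseq ℓ)) y - A t (u j (t + hseq ℓ)) y) / hseq ℓ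
        = lam j (t + hseq ℓ) * ((B (t + hseq ℓ) (ι (u j (t + hseq ℓ))) (ι y)
            - B t (ι (u j (t + hseq ℓ))) (ι y)) / hseq ℓ)
          + (lam j (t + hseq ℓ) - lam j t) / hseq ℓ * B t (ι (u j (t + hseq ℓ))) (ι y) := by
      intro ℓ
      have e1 := heig (t + hseq ℓ) y
      have e2 : A t (u j (t + hseq ℓ)) y = lam j t * B t (ι (u j (t + hseq ℓ))) (ι y) := by
        rw [hAsymm t, (hYeig y).1 hy (u j (t + hseq ℓ)), hBsymm t]
      have hne := hseq0 ℓ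
      field_simp
      linear_combination e1 - e2
    have hlimeq := tendsto_nhds_unique (quotA.congr hident) hRHS
    linarith
  -- the corrector-compatible version in the first slot
  have hCdotY0 : ∀ y ∈ Y,
      A' y φ - lamdot * B t (ι y) (ι φ) - lam j t * B' (ι y) (ι φ) = 0 := by
    intro y hy
    rw [hA's y φ, hBsymm t (ι y) (ι φ), hB's (ι y) (ι φ)]
    have := hdY y hy
    linarith
  have hCdotphi : A' φ φ - lamdot - lam j t * B' (ι φ) (ι φ) = 0 := by
    have := hdY φ hφY
    rw [hφnorm] at this
    linarith
  -- the difference-quotient eigenfunction equation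
  have hww : ∀ ℓ, u j (t + hseq ℓ)
      = φ + hseq ℓ • ((hseq ℓ)⁻¹ • (u j (t + hseq ℓ) - φ)) := by
    intro ℓ
    rw [smul_smul, mul_inv_cancel₀ (hseq0 ℓ), one_smul, add_sub_cancel]
  have hCw : ∀ ℓ, ∀ v : V,
      A t ((hseq ℓ)⁻¹ • (u j (t + hseq ℓ) - φ)) v
        - lam j t * B t (ι ((hseq ℓ)⁻¹ • (u j (t + hseq ℓ) - φ))) (ι v)
      = (hseq ℓ)⁻¹ * (A t (u j (t + hseq ℓ)) v
          - lam j t * B t (ι (u j (t + hseq ℓ))) (ι v)) := by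
    intro ℓ v
    have e1 : A t ((hseq ℓ)⁻¹ • (u j (t + hseq ℓ) - φ)) v
        = (hseq ℓ)⁻¹ * (A t (u j (t + hseq ℓ)) v - A t φ v) := by
      rw [map_smul, map_sub]
      simp [LinearMap.sub_apply, smul_eq_mul]
    have e2 : B t (ι ((hseq ℓ)⁻¹ • (u j (t + hseq ℓ) - φ))) (ι v)
        = (hseq ℓ)⁻¹ * (B t (ι (u j (t + hseq ℓ))) (ι v) - B t (ι φ) (ι v)) := by
      rw [map_smul, map_smul, map_sub, map_sub]
      simp [LinearMap.sub_apply, smul_eq_mul]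
    rw [e1, e2]
    have e3 := hYφ v
    linear_combination (-(hseq ℓ)⁻¹) * e3
  have hCp : ∀ ℓ, ∀ v : V,
      A t (P ((hseq ℓ)⁻¹ • (u j (t + hseq ℓ) - φ))) v
        - lam j t * B t (ι (P ((hseq ℓ)⁻¹ • (u j (t + hseq ℓ) - φ)))) (ι v)
      = (hseq ℓ)⁻¹ * (A t (u j (t + hseq ℓ)) v
          - lam j t * B t (ι (u j (t + hseq ℓ))) (ι v)) := by
    intro ℓ v
    have hy : (hseq ℓ)⁻¹ • (u j (t + hseq ℓ) - φ) - P ((hseq ℓ)⁻¹ • (u j (t + hseq ℓ) - φ)) ∈ Y :=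
      hPY _
    have e0 := (hYeig _).1 hy v
    simp only [map_sub, LinearMap.sub_apply] at e0
    have e1 := hCw ℓ v
    linarith
  -- pointwise convergence of the right-hand sides
  have hFv : ∀ v : V, Filter.Tendsto (fun ℓ => (hseq ℓ)⁻¹ * (A t (u j (t + hseq ℓ)) v
      - lam j t * B t (ι (u j (t + hseq ℓ))) (ι v))) Filter.atTop
      (𝓝 (A t zstar v - lam j t * B t (ι zstar) (ι v))) := by
    intro v
    have quotA := quot_tendsto A t A' A'' CA' CA'' hA'bdd hA''bdd hAder2 hseq hseq0 hseqlim huu v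
    have quotB := quot_tendsto B t B' B'' CB' CB'' hB'bdd hB''bdd hBder2 hseq hseq0 hseqlim
      hιuu (ι v)
    have hBt := bilin_tendsto (B t) CB (hBbdd t) hιuu
      (tendsto_const_nhds (x := ι v) (f := Filter.atTop))
    have hRHS := ((quotA.neg.add (hlm.mul quotB)).add (hγ.mul hBt))
    have hval : A t zstar v - lam j t * B t (ι zstar) (ι v)
        = -(A' φ v) + lam j t * B' (ι φ) (ι v) + lamdot * B t (ι φ) (ι v) := by
      rw [hz v]; ring
    rw [hval]
    refine hRHS.congr fun ℓ => ?_
    have e1 := heig (t + hseq ℓ) v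
    have hne := hseq0 ℓ
    field_simp
    linear_combination -e1
  -- a uniform bound for the right-hand sides
  have hKbdd : ∃ K : ℝ, ∀ᶠ ℓ in Filter.atTop, ∀ v : V,
      |(hseq ℓ)⁻¹ * (A t (u j (t + hseq ℓ)) v
        - lam j t * B t (ι (u j (t + hseq ℓ))) (ι v))| ≤ K * ‖v‖ := by
    obtain ⟨ηA, hηA, hTA⟩ := hAder2 1 one_pos
    obtain ⟨ηB, hηB, hTB⟩ := hBder2 1 one_pos
    set M : ℝ := ‖φ‖ + 1 with hM
    have hM0 : 0 < M := by positivity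
    refine ⟨(|CA'| + |CA''| + 1) * M
        + (|lam j t| + 1) * ((|CB'| + |CB''| + 1) * (‖ι‖ * M) * ‖ι‖)
        + (|lamdot| + 1) * (|CB| * (‖ι‖ * M) * ‖ι‖), ?_⟩
    have Ev1 : ∀ᶠ ℓ in Filter.atTop, |hseq ℓ| < min 1 (min ηA ηB) := by
      have h0 := Metric.tendsto_nhds.1 hseqlim (min 1 (min ηA ηB))
        (lt_min one_pos (lt_min hηA hηB))
      filter_upwards [h0] with ℓ h
      rwa [Real.dist_0_eq_abs] at h
    have Ev2 : ∀ᶠ ℓ in Filter.atTop, ‖u j (t + hseq ℓ)‖ ≤ M :=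
      huu.norm.eventually_le_const (lt_add_one _)
    have Ev3 : ∀ᶠ ℓ in Filter.atTop, |lam j (t + hseq ℓ)| ≤ |lam j t| + 1 :=
      hlm.abs.eventually_le_const (lt_add_one _)
    have Ev4 : ∀ᶠ ℓ in Filter.atTop,
        |(lam j (t + hseq ℓ) - lam j t) / hseq ℓ| ≤ |lamdot| + 1 :=
      hγ.abs.eventually_le_const (lt_add_one _)
    filter_upwards [Ev1, Ev2, Ev3, Ev4] with ℓ h1 h2 h3 h4
    intro v
    have hne : hseq ℓ ≠ 0 := hseq0 ℓ
    have hpos : 0 < |hseq ℓ| := abs_pos.2 hne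
    have hle1 : |hseq ℓ| ≤ 1 := le_of_lt (lt_of_lt_of_le h1 (min_le_left _ _))
    have hηA' : |hseq ℓ| < ηA :=
      lt_of_lt_of_le h1 (le_trans (min_le_right _ _) (min_le_left _ _))
    have hηB' : |hseq ℓ| < ηB :=
      lt_of_lt_of_le h1 (le_trans (min_le_right _ _) (min_le_right _ _))
    have hident : (hseq ℓ)⁻¹ * (A t (u j (t + hseq ℓ)) v
        - lam j t * B t (ι (u j (t + hseq ℓ))) (ι v))
      = -((A (t + hseq ℓ) (u j (t + hseq ℓ)) v - A t (u j (t + hseq ℓ)) v) / hseq ℓ)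
        + lam j (t + hseq ℓ) * ((B (t + hseq ℓ) (ι (u j (t + hseq ℓ))) (ι v)
            - B t (ι (u j (t + hseq ℓ))) (ι v)) / hseq ℓ)
        + (lam j (t + hseq ℓ) - lam j t) / hseq ℓ * B t (ι (u j (t + hseq ℓ))) (ι v) := by
      have e1 := heig (t + hseq ℓ) v
      field_simp
      linear_combination e1
    rw [hident]
    -- bound the three pieces
    have hquotA : |(A (t + hseq ℓ) (u j (t + hseq ℓ)) v - A t (u j (t + hseq ℓ)) v) / hseq ℓ|
        ≤ ((|CA'| + |CA''| + 1) * M) * ‖v‖ := by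
      set Φ : V →ₗ[ℝ] V →ₗ[ℝ] ℝ :=
        A (t + hseq ℓ) - A t - hseq ℓ • A' - ((hseq ℓ) ^ 2 / 2) • A'' with hΦ
      have happ : ∀ x y : V, Φ x y = A (t + hseq ℓ) x y - A t x y - hseq ℓ * A' x y
          - (hseq ℓ) ^ 2 / 2 * A'' x y := by
        intro x y
        simp [hΦ, LinearMap.sub_apply, LinearMap.smul_apply, smul_eq_mul]
      have hTay := bilin_scale Φ (1 * (hseq ℓ) ^ 2) (by
        intro x y hx hy
        rw [happ]
        exact hTA (hseq ℓ) hne hηA' x y hx hy) (u j (t + hseq ℓ)) v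
      rw [happ] at hTay
      have hA'b : |A' (u j (t + hseq ℓ)) v| ≤ |CA'| * M * ‖v‖ :=
        abs_le_scale2 (hA'bdd _ v) h2 le_rfl (norm_nonneg _) (norm_nonneg _)
      have hA''b : |A'' (u j (t + hseq ℓ)) v| ≤ |CA''| * M * ‖v‖ :=
        abs_le_scale2 (hA''bdd _ v) h2 le_rfl (norm_nonneg _) (norm_nonneg _)
      rw [abs_div, div_le_iff₀ hpos]
      have htri : |A (t + hseq ℓ) (u j (t + hseq ℓ)) v - A t (u j (t + hseq ℓ)) v|
          ≤ |hseq ℓ| * |A' (u j (t + hseq ℓ)) v| + (hseq ℓ) ^ 2 / 2 * |A'' (u j (t + hseq ℓ)) v|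
            + 1 * (hseq ℓ) ^ 2 * (‖u j (t + hseq ℓ)‖ * ‖v‖) := by
        have hdec : A (t + hseq ℓ) (u j (t + hseq ℓ)) v - A t (u j (t + hseq ℓ)) v
            = (A (t + hseq ℓ) (u j (t + hseq ℓ)) v - A t (u j (t + hseq ℓ)) v
              - hseq ℓ * A' (u j (t + hseq ℓ)) v - (hseq ℓ) ^ 2 / 2 * A'' (u j (t + hseq ℓ)) v)
              + hseq ℓ * A' (u j (t + hseq ℓ)) v + (hseq ℓ) ^ 2 / 2 * A'' (u j (t + hseq ℓ)) v := by
          ring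
        rw [hdec]
        have t1 := abs_add_le (A (t + hseq ℓ) (u j (t + hseq ℓ)) v - A t (u j (t + hseq ℓ)) v
            - hseq ℓ * A' (u j (t + hseq ℓ)) v - (hseq ℓ) ^ 2 / 2 * A'' (u j (t + hseq ℓ)) v
            + hseq ℓ * A' (u j (t + hseq ℓ)) v) ((hseq ℓ) ^ 2 / 2 * A'' (u j (t + hseq ℓ)) v)
        have t2 := abs_add_le (A (t + hseq ℓ) (u j (t + hseq ℓ)) v - A t (u j (t + hseq ℓ)) v
            - hseq ℓ * A' (u j (t + hseq ℓ)) v - (hseq ℓ) ^ 2 / 2 * A'' (u j (t + hseq ℓ)) v)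
            (hseq ℓ * A' (u j (t + hseq ℓ)) v)
        have t3 : |hseq ℓ * A' (u j (t + hseq ℓ)) v|
            = |hseq ℓ| * |A' (u j (t + hseq ℓ)) v| := abs_mul _ _
        have t4 : |(hseq ℓ) ^ 2 / 2 * A'' (u j (t + hseq ℓ)) v|
            = (hseq ℓ) ^ 2 / 2 * |A'' (u j (t + hseq ℓ)) v| := by
          rw [abs_mul, abs_of_nonneg (by positivity : (0:ℝ) ≤ (hseq ℓ) ^ 2 / 2)]
        linarith
      have hsq : (hseq ℓ) ^ 2 = |hseq ℓ| * |hseq ℓ| := by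
        rw [← sq_abs, sq]
      have huv : ‖u j (t + hseq ℓ)‖ * ‖v‖ ≤ M * ‖v‖ :=
        mul_le_mul_of_nonneg_right h2 (norm_nonneg v)
      have hAM : 0 ≤ M * ‖v‖ := by positivity
      have hX2 : (0:ℝ) ≤ |CA''| * M * ‖v‖ := by positivity
      rw [hsq] at htri
      linarith [htri,
        mul_le_mul_of_nonneg_left hA'b (abs_nonneg (hseq ℓ)),
        mul_le_mul_of_nonneg_left hA''b (mul_nonneg (abs_nonneg (hseq ℓ)) (abs_nonneg (hseq ℓ))),
        mul_le_mul_of_nonneg_left huv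
          (mul_nonneg (abs_nonneg (hseq ℓ)) (abs_nonneg (hseq ℓ))),
        mul_le_mul_of_nonneg_right hle1 (mul_nonneg (abs_nonneg (hseq ℓ)) hX2),
        mul_le_mul_of_nonneg_right hle1 (mul_nonneg (abs_nonneg (hseq ℓ)) hAM),
        mul_nonneg (abs_nonneg (hseq ℓ)) hX2,
        mul_nonneg (abs_nonneg (hseq ℓ)) hAM]
    have hιu : ‖ι (u j (t + hseq ℓ))‖ ≤ ‖ι‖ * M :=
      le_trans (ι.le_opNorm _) (mul_le_mul_of_nonneg_left h2 (norm_nonneg _))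
    have hιv : ‖ι v‖ ≤ ‖ι‖ * ‖v‖ := ι.le_opNorm v
    have hquotB : |(B (t + hseq ℓ) (ι (u j (t + hseq ℓ))) (ι v)
        - B t (ι (u j (t + hseq ℓ))) (ι v)) / hseq ℓ|
        ≤ (|CB'| + |CB''| + 1) * (‖ι‖ * M) * (‖ι‖ * ‖v‖) := by
      set Φ : X →ₗ[ℝ] X →ₗ[ℝ] ℝ :=
        B (t + hseq ℓ) - B t - hseq ℓ • B' - ((hseq ℓ) ^ 2 / 2) • B'' with hΦ
      have happ : ∀ x y : X, Φ x y = B (t + hseq ℓ) x y - B t x y - hseq ℓ * B' x y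
          - (hseq ℓ) ^ 2 / 2 * B'' x y := by
        intro x y
        simp [hΦ, LinearMap.sub_apply, LinearMap.smul_apply, smul_eq_mul]
      have hTay := bilin_scale Φ (1 * (hseq ℓ) ^ 2) (by
        intro x y hx hy
        rw [happ]
        exact hTB (hseq ℓ) hne hηB' x y hx hy) (ι (u j (t + hseq ℓ))) (ι v)
      rw [happ] at hTay
      have hB'b : |B' (ι (u j (t + hseq ℓ))) (ι v)| ≤ |CB'| * (‖ι‖ * M) * (‖ι‖ * ‖v‖) :=
        abs_le_scale2 (hB'bdd _ _) hιu hιv (norm_nonneg _) (norm_nonneg _)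
      have hB''b : |B'' (ι (u j (t + hseq ℓ))) (ι v)| ≤ |CB''| * (‖ι‖ * M) * (‖ι‖ * ‖v‖) :=
        abs_le_scale2 (hB''bdd _ _) hιu hιv (norm_nonneg _) (norm_nonneg _)
      rw [abs_div, div_le_iff₀ hpos]
      have htri : |B (t + hseq ℓ) (ι (u j (t + hseq ℓ))) (ι v)
            - B t (ι (u j (t + hseq ℓ))) (ι v)|
          ≤ |hseq ℓ| * |B' (ι (u j (t + hseq ℓ))) (ι v)|
            + (hseq ℓ) ^ 2 / 2 * |B'' (ι (u j (t + hseq ℓ))) (ι v)|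
            + 1 * (hseq ℓ) ^ 2 * (‖ι (u j (t + hseq ℓ))‖ * ‖ι v‖) := by
        have hdec : B (t + hseq ℓ) (ι (u j (t + hseq ℓ))) (ι v)
              - B t (ι (u j (t + hseq ℓ))) (ι v)
            = (B (t + hseq ℓ) (ι (u j (t + hseq ℓ))) (ι v)
              - B t (ι (u j (t + hseq ℓ))) (ι v)
              - hseq ℓ * B' (ι (u j (t + hseq ℓ))) (ι v)
              - (hseq ℓ) ^ 2 / 2 * B'' (ι (u j (t + hseq ℓ))) (ι v))
              + hseq ℓ * B' (ι (u j (t + hseq ℓ))) (ι v)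
              + (hseq ℓ) ^ 2 / 2 * B'' (ι (u j (t + hseq ℓ))) (ι v) := by
          ring
        rw [hdec]
        have t1 := abs_add_le (B (t + hseq ℓ) (ι (u j (t + hseq ℓ))) (ι v)
            - B t (ι (u j (t + hseq ℓ))) (ι v)
            - hseq ℓ * B' (ι (u j (t + hseq ℓ))) (ι v)
            - (hseq ℓ) ^ 2 / 2 * B'' (ι (u j (t + hseq ℓ))) (ι v)
            + hseq ℓ * B' (ι (u j (t + hseq ℓ))) (ι v))
            ((hseq ℓ) ^ 2 / 2 * B'' (ι (u j (t + hseq ℓ))) (ι v))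
        have t2 := abs_add_le (B (t + hseq ℓ) (ι (u j (t + hseq ℓ))) (ι v)
            - B t (ι (u j (t + hseq ℓ))) (ι v)
            - hseq ℓ * B' (ι (u j (t + hseq ℓ))) (ι v)
            - (hseq ℓ) ^ 2 / 2 * B'' (ι (u j (t + hseq ℓ))) (ι v))
            (hseq ℓ * B' (ι (u j (t + hseq ℓ))) (ι v))
        have t3 : |hseq ℓ * B' (ι (u j (t + hseq ℓ))) (ι v)|
            = |hseq ℓ| * |B' (ι (u j (t + hseq ℓ))) (ι v)| := abs_mul _ _
        have t4 : |(hseq ℓ) ^ 2 / 2 * B'' (ι (u j (t + hseq ℓ))) (ι v)|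
            = (hseq ℓ) ^ 2 / 2 * |B'' (ι (u j (t + hseq ℓ))) (ι v)| := by
          rw [abs_mul, abs_of_nonneg (by positivity : (0:ℝ) ≤ (hseq ℓ) ^ 2 / 2)]
        linarith
      have hsq : (hseq ℓ) ^ 2 = |hseq ℓ| * |hseq ℓ| := by
        rw [← sq_abs, sq]
      have huv : ‖ι (u j (t + hseq ℓ))‖ * ‖ι v‖ ≤ (‖ι‖ * M) * (‖ι‖ * ‖v‖) :=
        mul_le_mul hιu hιv (norm_nonneg _) (by positivity)
      have hAM : 0 ≤ (‖ι‖ * M) * (‖ι‖ * ‖v‖) := by positivity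
      have hX2 : (0:ℝ) ≤ |CB''| * (‖ι‖ * M) * (‖ι‖ * ‖v‖) := by positivity
      rw [hsq] at htri
      linarith [htri,
        mul_le_mul_of_nonneg_left hB'b (abs_nonneg (hseq ℓ)),
        mul_le_mul_of_nonneg_left hB''b (mul_nonneg (abs_nonneg (hseq ℓ)) (abs_nonneg (hseq ℓ))),
        mul_le_mul_of_nonneg_left huv
          (mul_nonneg (abs_nonneg (hseq ℓ)) (abs_nonneg (hseq ℓ))),
        mul_le_mul_of_nonneg_right hle1 (mul_nonneg (abs_nonneg (hseq ℓ)) hX2),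
        mul_le_mul_of_nonneg_right hle1 (mul_nonneg (abs_nonneg (hseq ℓ)) hAM),
        mul_nonneg (abs_nonneg (hseq ℓ)) hX2,
        mul_nonneg (abs_nonneg (hseq ℓ)) hAM]
    have hBtb : |B t (ι (u j (t + hseq ℓ))) (ι v)| ≤ |CB| * (‖ι‖ * M) * (‖ι‖ * ‖v‖) :=
      abs_le_scale2 (hBbdd t _ _) hιu hιv (norm_nonneg _) (norm_nonneg _)
    have hlmb : |lam j (t + hseq ℓ) * ((B (t + hseq ℓ) (ι (u j (t + hseq ℓ))) (ι v)
        - B t (ι (u j (t + hseq ℓ))) (ι v)) / hseq ℓ)|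
        ≤ (|lam j t| + 1) * ((|CB'| + |CB''| + 1) * (‖ι‖ * M) * (‖ι‖ * ‖v‖)) := by
      rw [abs_mul]
      exact mul_le_mul h3 hquotB (abs_nonneg _) (by positivity)
    have hγb : |(lam j (t + hseq ℓ) - lam j t) / hseq ℓ * B t (ι (u j (t + hseq ℓ))) (ι v)|
        ≤ (|lamdot| + 1) * (|CB| * (‖ι‖ * M) * (‖ι‖ * ‖v‖)) := by
      rw [abs_mul]
      exact mul_le_mul h4 hBtb (abs_nonneg _) (by positivity)
    have habs3 : |(-((A (t + hseq ℓ) (u j (t + hseq ℓ)) v - A t (u j (t + hseq ℓ)) v) / hseq ℓ))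
        + lam j (t + hseq ℓ) * ((B (t + hseq ℓ) (ι (u j (t + hseq ℓ))) (ι v)
            - B t (ι (u j (t + hseq ℓ))) (ι v)) / hseq ℓ)
        + (lam j (t + hseq ℓ) - lam j t) / hseq ℓ * B t (ι (u j (t + hseq ℓ))) (ι v)|
        ≤ |(A (t + hseq ℓ) (u j (t + hseq ℓ)) v - A t (u j (t + hseq ℓ)) v) / hseq ℓ|
          + |lam j (t + hseq ℓ) * ((B (t + hseq ℓ) (ι (u j (t + hseq ℓ))) (ι v)
              - B t (ι (u j (t + hseq ℓ))) (ι v)) / hseq ℓ)|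
          + |(lam j (t + hseq ℓ) - lam j t) / hseq ℓ * B t (ι (u j (t + hseq ℓ))) (ι v)| := by
      have u1 := abs_add_le (-((A (t + hseq ℓ) (u j (t + hseq ℓ)) v
          - A t (u j (t + hseq ℓ)) v) / hseq ℓ)
          + lam j (t + hseq ℓ) * ((B (t + hseq ℓ) (ι (u j (t + hseq ℓ))) (ι v)
            - B t (ι (u j (t + hseq ℓ))) (ι v)) / hseq ℓ))
          ((lam j (t + hseq ℓ) - lam j t) / hseq ℓ * B t (ι (u j (t + hseq ℓ))) (ι v))
      have u2 := abs_add_le (-((A (t + hseq ℓ) (u j (t + hseq ℓ)) v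
          - A t (u j (t + hseq ℓ)) v) / hseq ℓ))
          (lam j (t + hseq ℓ) * ((B (t + hseq ℓ) (ι (u j (t + hseq ℓ))) (ι v)
            - B t (ι (u j (t + hseq ℓ))) (ι v)) / hseq ℓ))
      rw [abs_neg] at u2
      linarith
    have hfinal := le_trans habs3 (by linarith [hquotA, hlmb, hγb] :
      |(A (t + hseq ℓ) (u j (t + hseq ℓ)) v - A t (u j (t + hseq ℓ)) v) / hseq ℓ|
        + |lam j (t + hseq ℓ) * ((B (t + hseq ℓ) (ι (u j (t + hseq ℓ))) (ι v)
            - B t (ι (u j (t + hseq ℓ))) (ι v)) / hseq ℓ)|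
        + |(lam j (t + hseq ℓ) - lam j t) / hseq ℓ * B t (ι (u j (t + hseq ℓ))) (ι v)|
      ≤ ((|CA'| + |CA''| + 1) * M) * ‖v‖
        + (|lam j t| + 1) * ((|CB'| + |CB''| + 1) * (‖ι‖ * M) * (‖ι‖ * ‖v‖))
        + (|lamdot| + 1) * (|CB| * (‖ι‖ * M) * (‖ι‖ * ‖v‖)))
    calc |(-((A (t + hseq ℓ) (u j (t + hseq ℓ)) v - A t (u j (t + hseq ℓ)) v) / hseq ℓ))
        + lam j (t + hseq ℓ) * ((B (t + hseq ℓ) (ι (u j (t + hseq ℓ))) (ι v)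
            - B t (ι (u j (t + hseq ℓ))) (ι v)) / hseq ℓ)
        + (lam j (t + hseq ℓ) - lam j t) / hseq ℓ * B t (ι (u j (t + hseq ℓ))) (ι v)|
        ≤ ((|CA'| + |CA''| + 1) * M) * ‖v‖
          + (|lam j t| + 1) * ((|CB'| + |CB''| + 1) * (‖ι‖ * M) * (‖ι‖ * ‖v‖))
          + (|lamdot| + 1) * (|CB| * (‖ι‖ * M) * (‖ι‖ * ‖v‖)) := hfinal
      _ = ((|CA'| + |CA''| + 1) * M
          + (|lam j t| + 1) * ((|CB'| + |CB''| + 1) * (‖ι‖ * M) * ‖ι‖)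
          + (|lamdot| + 1) * (|CB| * (‖ι‖ * M) * ‖ι‖)) * ‖v‖ := by ring
  -- continuous-linear-functional representations
  have hAclm : ∀ v : V, ∃ g : V →L[ℝ] ℝ, ∀ x : V, g x = A t x v := by
    intro v
    have hb : ∀ x y : V, ‖A t x y‖ ≤ |CA| * ‖x‖ * ‖y‖ := by
      intro x y
      rw [Real.norm_eq_abs]
      exact le_trans (hAbdd t x y) (mul_le_mul_of_nonneg_right
        (mul_le_mul_of_nonneg_right (le_abs_self CA) (norm_nonneg x)) (norm_nonneg y))
    exact ⟨(LinearMap.mkContinuous₂ (A t) |CA| hb).flip v, fun x => by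
      simp [ContinuousLinearMap.flip_apply, LinearMap.mkContinuous₂_apply]⟩
  have hA'clm : ∀ v : V, ∃ g : V →L[ℝ] ℝ, ∀ x : V, g x = A' x v := by
    intro v
    have hb : ∀ x y : V, ‖A' x y‖ ≤ |CA'| * ‖x‖ * ‖y‖ := by
      intro x y
      rw [Real.norm_eq_abs]
      exact le_trans (hA'bdd x y) (mul_le_mul_of_nonneg_right
        (mul_le_mul_of_nonneg_right (le_abs_self CA') (norm_nonneg x)) (norm_nonneg y))
    exact ⟨(LinearMap.mkContinuous₂ A' |CA'| hb).flip v, fun x => by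
      simp [ContinuousLinearMap.flip_apply, LinearMap.mkContinuous₂_apply]⟩
  have hBclm : ∀ y : X, ∃ g : V →L[ℝ] ℝ, ∀ x : V, g x = B t (ι x) y := by
    intro y
    have hb : ∀ x z : X, ‖B t x z‖ ≤ |CB| * ‖x‖ * ‖z‖ := by
      intro x z
      rw [Real.norm_eq_abs]
      exact le_trans (hBbdd t x z) (mul_le_mul_of_nonneg_right
        (mul_le_mul_of_nonneg_right (le_abs_self CB) (norm_nonneg x)) (norm_nonneg z))
    exact ⟨((LinearMap.mkContinuous₂ (B t) |CB| hb).flip y).comp ι, fun x => by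
      simp [ContinuousLinearMap.comp_apply, ContinuousLinearMap.flip_apply,
        LinearMap.mkContinuous₂_apply]⟩
  have hB'clm : ∀ y : X, ∃ g : V →L[ℝ] ℝ, ∀ x : V, g x = B' (ι x) y := by
    intro y
    have hb : ∀ x z : X, ‖B' x z‖ ≤ |CB'| * ‖x‖ * ‖z‖ := by
      intro x z
      rw [Real.norm_eq_abs]
      exact le_trans (hB'bdd x z) (mul_le_mul_of_nonneg_right
        (mul_le_mul_of_nonneg_right (le_abs_self CB') (norm_nonneg x)) (norm_nonneg z))
    exact ⟨((LinearMap.mkContinuous₂ B' |CB'| hb).flip y).comp ι, fun x => by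
      simp [ContinuousLinearMap.comp_apply, ContinuousLinearMap.flip_apply,
        LinearMap.mkContinuous₂_apply]⟩
  -- Part 1 : convergence of the corrector pairing
  have hCpφ : Filter.Tendsto (fun ℓ =>
      A' (P ((hseq ℓ)⁻¹ • (u j (t + hseq ℓ) - φ))) φ
        - lamdot * B t (ι (P ((hseq ℓ)⁻¹ • (u j (t + hseq ℓ) - φ)))) (ι φ)
        - lam j t * B' (ι (P ((hseq ℓ)⁻¹ • (u j (t + hseq ℓ) - φ)))) (ι φ))
      Filter.atTop
      (𝓝 (A' zstar φ - lamdot * B t (ι zstar) (ι φ) - lam j t * B' (ι zstar) (ι φ))) := by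
    obtain ⟨K, hK⟩ := hKbdd
    obtain ⟨pf, hpf⟩ : ∃ pf : ℕ → V, ∀ ℓ,
        pf ℓ = P ((hseq ℓ)⁻¹ • (u j (t + hseq ℓ) - φ)) := ⟨_, fun ℓ => rfl⟩
    have hsmulA : ∀ (c : ℝ) (x v : V), A t (c • x) v = c * A t x v := by
      intro c x v
      rw [map_smul]
      simp [LinearMap.smul_apply, smul_eq_mul]
    have hsmulB : ∀ (c : ℝ) (x : V) (y : X), B t (ι (c • x)) y = c * B t (ι x) y := by
      intro c x y
      rw [map_smul, map_smul]
      simp [LinearMap.smul_apply, smul_eq_mul]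
    have hCsc : ∀ (c : ℝ) (x v : V), A t (c • x) v - lam j t * B t (ι (c • x)) (ι v)
        = c * (A t x v - lam j t * B t (ι x) (ι v)) := by
      intro c x v
      rw [hsmulA, hsmulB]
      ring
    have hgoalfun : ∀ ℓ, A' (P ((hseq ℓ)⁻¹ • (u j (t + hseq ℓ) - φ))) φ
        - lamdot * B t (ι (P ((hseq ℓ)⁻¹ • (u j (t + hseq ℓ) - φ)))) (ι φ)
        - lam j t * B' (ι (P ((hseq ℓ)⁻¹ • (u j (t + hseq ℓ) - φ)))) (ι φ)
        = A' (pf ℓ) φ - lamdot * B t (ι (pf ℓ)) (ι φ) - lam j t * B' (ι (pf ℓ)) (ι φ) := by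
      intro ℓ; rw [hpf]
    rw [Filter.tendsto_iff_ultrafilter]
    intro 𝒰 h𝒰
    have hK𝒰 := hK.filter_mono h𝒰
    by_cases hbd : ∃ K' : ℝ, ∀ᶠ ℓ in (𝒰 : Filter ℕ), ‖pf ℓ‖ ≤ K'
    · -- bounded case : extract a weak limit and identify it with zstar
      obtain ⟨K', hK'⟩ := hbd
      obtain ⟨pinf, hweak⟩ := ultra_weak_limit 𝒰 pf K' hK'
      have hCeq : ∀ v : V, A t pinf v - lam j t * B t (ι pinf) (ι v)
          = A t zstar v - lam j t * B t (ι zstar) (ι v) := by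
        intro v
        obtain ⟨gA, hgA⟩ := hAclm v
        obtain ⟨gB, hgB⟩ := hBclm (ι v)
        have t1 := (hweak gA).sub ((hweak gB).const_mul (lam j t))
        have hv1 : gA pinf - lam j t * gB pinf
            = A t pinf v - lam j t * B t (ι pinf) (ι v) := by rw [hgA, hgB]
        rw [hv1] at t1
        have t1' : Filter.Tendsto (fun ℓ => A t (pf ℓ) v - lam j t * B t (ι (pf ℓ)) (ι v))
            (𝒰 : Filter ℕ) (𝓝 (A t pinf v - lam j t * B t (ι pinf) (ι v))) := by
          refine t1.congr fun ℓ => ?_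
          simp only [hgA, hgB]
        have t2 : Filter.Tendsto (fun ℓ => A t (pf ℓ) v - lam j t * B t (ι (pf ℓ)) (ι v))
            (𝒰 : Filter ℕ) (𝓝 (A t zstar v - lam j t * B t (ι zstar) (ι v))) := by
          refine ((hFv v).mono_left h𝒰).congr fun ℓ => ?_
          rw [hpf]
          exact (hCp ℓ v).symm
        exact tendsto_nhds_unique t1' t2
      have hq0Y : pinf - zstar ∈ Y := by
        rw [hYeig]
        intro v
        have h1 := hCeq v
        simp only [map_sub, LinearMap.sub_apply]
        linarith
      have hBpinf : ∀ y ∈ Y, B t (ι pinf) (ι y) = 0 := by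
        intro y hy
        obtain ⟨gB, hgB⟩ := hBclm (ι y)
        have t1 := hweak gB
        have t2 : Filter.Tendsto (fun ℓ => gB (pf ℓ)) (𝒰 : Filter ℕ) (𝓝 0) := by
          refine tendsto_const_nhds.congr fun ℓ => ?_
          rw [hgB, hpf]
          exact (hPorth _ y hy).symm
        have h0 := tendsto_nhds_unique t1 t2
        rw [hgB] at h0
        exact h0
      have hBz : ∀ y ∈ Y, B t (ι zstar) (ι y) = 0 := by
        intro y hy
        have h0 := hPorth zstar y hy
        rwa [hzP] at h0
      have hdiff : pinf = zstar := by
        have e1 := hBpinf _ hq0Y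
        have e2 := hBz _ hq0Y
        have h00 : B t (ι (pinf - zstar)) (ι (pinf - zstar)) = 0 := by
          rw [map_sub ι pinf zstar, map_sub (B t)]
          simp only [LinearMap.sub_apply]
          rw [map_sub ι pinf zstar] at e1 e2
          linarith
        have hc := hBcoer t (ι (pinf - zstar))
        rw [h00] at hc
        have h4a : ‖ι (pinf - zstar)‖ ^ 2 = 0 := le_antisymm
          (by nlinarith [mul_nonneg hδ.le (sq_nonneg (‖ι (pinf - zstar)‖))]) (sq_nonneg _)
        have h4 : ‖ι (pinf - zstar)‖ = 0 := by
          exact sq_eq_zero_iff.mp h4a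
        have h5 : ι (pinf - zstar) = ι 0 := by rw [map_zero]; exact norm_eq_zero.mp h4
        exact sub_eq_zero.mp (hι h5)
      obtain ⟨gA', hgA'⟩ := hA'clm φ
      obtain ⟨gBt, hgBt⟩ := hBclm (ι φ)
      obtain ⟨gB', hgB'⟩ := hB'clm (ι φ)
      have tfin := ((hweak gA').sub ((hweak gBt).const_mul lamdot)).sub
        ((hweak gB').const_mul (lam j t))
      have hvale : gA' pinf - lamdot * gBt pinf - lam j t * gB' pinf
          = A' zstar φ - lamdot * B t (ι zstar) (ι φ) - lam j t * B' (ι zstar) (ι φ) := by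
        rw [hgA', hgBt, hgB', hdiff]
      rw [hvale] at tfin
      refine tfin.congr fun ℓ => ?_
      rw [hgA', hgBt, hgB', hgoalfun ℓ]
    · -- unbounded case : contradiction with coercivity via compactness
      exfalso
      push_neg at hbd
      have htop : Filter.Tendsto (fun ℓ => ‖pf ℓ‖) (𝒰 : Filter ℕ) Filter.atTop := by
        rw [Filter.tendsto_atTop]
        intro b
        have h1 := hbd b
        have h2 : ∀ᶠ ℓ in (𝒰 : Filter ℕ), ¬ ‖pf ℓ‖ ≤ b := by
          filter_upwards [h1] with ℓ h; exact not_le.mpr h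
        filter_upwards [h2] with ℓ h3
        exact le_of_lt (not_le.mp h3)
      have hinv : Filter.Tendsto (fun ℓ => ‖pf ℓ‖⁻¹) (𝒰 : Filter ℕ) (𝓝 0) :=
        htop.inv_tendsto_atTop
      obtain ⟨q, hq⟩ : ∃ q : ℕ → V, ∀ ℓ, q ℓ = ‖pf ℓ‖⁻¹ • pf ℓ := ⟨_, fun ℓ => rfl⟩
      have hq1 : ∀ ℓ, ‖q ℓ‖ ≤ 1 := by
        intro ℓ
        rw [hq, norm_smul, Real.norm_eq_abs, abs_inv, abs_of_nonneg (norm_nonneg _)]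
        rcases eq_or_ne (‖pf ℓ‖) 0 with h0 | h0
        · rw [h0]; simp
        · rw [inv_mul_cancel₀ h0]
      obtain ⟨qinf, hweakq⟩ := ultra_weak_limit 𝒰 q 1 (Filter.Eventually.of_forall hq1)
      have hqCzero : ∀ v : V, A t qinf v - lam j t * B t (ι qinf) (ι v) = 0 := by
        intro v
        obtain ⟨gA, hgA⟩ := hAclm v
        obtain ⟨gB, hgB⟩ := hBclm (ι v)
        have t1 := (hweakq gA).sub ((hweakq gB).const_mul (lam j t))
        have hv1 : gA qinf - lam j t * gB qinf
            = A t qinf v - lam j t * B t (ι qinf) (ι v) := by rw [hgA, hgB]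
        rw [hv1] at t1
        have t1' : Filter.Tendsto (fun ℓ => A t (q ℓ) v - lam j t * B t (ι (q ℓ)) (ι v))
            (𝒰 : Filter ℕ) (𝓝 (A t qinf v - lam j t * B t (ι qinf) (ι v))) := by
          refine t1.congr fun ℓ => ?_
          simp only [hgA, hgB]
        have t2 : Filter.Tendsto (fun ℓ => A t (q ℓ) v - lam j t * B t (ι (q ℓ)) (ι v))
            (𝒰 : Filter ℕ) (𝓝 0) := by
          have t3 := hinv.mul ((hFv v).mono_left h𝒰)
          rw [zero_mul] at t3
          refine t3.congr fun ℓ => ?_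
          have h3 := hCsc (‖pf ℓ‖⁻¹) (pf ℓ) v
          rw [← hq ℓ] at h3
          rw [hpf ℓ] at h3
          rw [hCp ℓ v] at h3
          rw [← hpf ℓ] at h3
          exact h3.symm
        exact tendsto_nhds_unique t1' t2
      have hqinfY : qinf ∈ Y := by
        rw [hYeig]
        intro v
        have := hqCzero v
        linarith
      have hBqinf : ∀ y ∈ Y, B t (ι qinf) (ι y) = 0 := by
        intro y hy
        obtain ⟨gB, hgB⟩ := hBclm (ι y)
        have t1 := hweakq gB
        have t2 : Filter.Tendsto (fun ℓ => gB (q ℓ)) (𝒰 : Filter ℕ) (𝓝 0) := by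
          refine tendsto_const_nhds.congr fun ℓ => ?_
          rw [hgB, hq, hsmulB, hpf, hPorth _ y hy, mul_zero]
        have h0 := tendsto_nhds_unique t1 t2
        rw [hgB] at h0
        exact h0
      have hqinf0 : qinf = 0 := by
        have h00 := hBqinf qinf hqinfY
        have hc := hBcoer t (ι qinf)
        rw [h00] at hc
        have h4a : ‖ι qinf‖ ^ 2 = 0 := le_antisymm
          (by nlinarith [mul_nonneg hδ.le (sq_nonneg (‖ι qinf‖))]) (sq_nonneg _)
        have h4 : ‖ι qinf‖ = 0 := by
          exact sq_eq_zero_iff.mp h4a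
        have h5 : ι qinf = ι 0 := by rw [map_zero]; exact norm_eq_zero.mp h4
        exact hι h5
      have hstr := ultra_compact_strong ι hcompact 𝒰 q hq1 qinf hweakq
      rw [hqinf0, map_zero] at hstr
      have hBqq : Filter.Tendsto (fun ℓ => B t (ι (q ℓ)) (ι (q ℓ))) (𝒰 : Filter ℕ) (𝓝 0) := by
        have h1 := bilin_tendsto (B t) CB (hBbdd t) hstr hstr
        have h2 : B t (0 : X) (0 : X) = 0 := by simp
        rwa [h2] at h1
      have hCqq : Filter.Tendsto (fun ℓ => A t (q ℓ) (q ℓ) - lam j t * B t (ι (q ℓ)) (ι (q ℓ)))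
          (𝒰 : Filter ℕ) (𝓝 0) := by
        apply squeeze_zero_norm' (a := fun ℓ => |K| * ‖pf ℓ‖⁻¹)
        · filter_upwards [hK𝒰] with ℓ h1
          have h2 := h1 (q ℓ)
          have h3 : A t (q ℓ) (q ℓ) - lam j t * B t (ι (q ℓ)) (ι (q ℓ))
              = ‖pf ℓ‖⁻¹ * ((hseq ℓ)⁻¹ * (A t (u j (t + hseq ℓ)) (q ℓ)
                - lam j t * B t (ι (u j (t + hseq ℓ))) (ι (q ℓ)))) := by
            have h3a := hCsc (‖pf ℓ‖⁻¹) (pf ℓ) (q ℓ)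
            rw [← hq ℓ] at h3a
            rw [hpf ℓ] at h3a
            rw [hCp ℓ (q ℓ)] at h3a
            rw [← hpf ℓ] at h3a
            exact h3a
          rw [Real.norm_eq_abs, h3, abs_mul, abs_inv, abs_of_nonneg (norm_nonneg _)]
          have h4 : |(hseq ℓ)⁻¹ * (A t (u j (t + hseq ℓ)) (q ℓ)
              - lam j t * B t (ι (u j (t + hseq ℓ))) (ι (q ℓ)))| ≤ |K| := by
            refine le_trans h2 ?_
            calc K * ‖q ℓ‖ ≤ |K| * ‖q ℓ‖ :=
                  mul_le_mul_of_nonneg_right (le_abs_self K) (norm_nonneg _)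
              _ ≤ |K| * 1 := mul_le_mul_of_nonneg_left (hq1 ℓ) (abs_nonneg K)
              _ = |K| := mul_one _
          calc ‖pf ℓ‖⁻¹ * |(hseq ℓ)⁻¹ * (A t (u j (t + hseq ℓ)) (q ℓ)
              - lam j t * B t (ι (u j (t + hseq ℓ))) (ι (q ℓ)))|
              ≤ ‖pf ℓ‖⁻¹ * |K| :=
                mul_le_mul_of_nonneg_left h4 (inv_nonneg.mpr (norm_nonneg _))
            _ = |K| * ‖pf ℓ‖⁻¹ := mul_comm _ _
        · have h5 := hinv.const_mul (|K|)
          rwa [mul_zero] at h5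
      have hAqq : Filter.Tendsto (fun ℓ => A t (q ℓ) (q ℓ)) (𝒰 : Filter ℕ) (𝓝 0) := by
        have h1 := hCqq.add (hBqq.const_mul (lam j t))
        simp only [mul_zero, add_zero] at h1
        refine h1.congr fun ℓ => ?_
        ring
      have hev : ∀ᶠ ℓ in (𝒰 : Filter ℕ), δ ≤ A t (q ℓ) (q ℓ) := by
        have h1 : ∀ᶠ ℓ in (𝒰 : Filter ℕ), (1:ℝ) ≤ ‖pf ℓ‖ :=
          htop.eventually_ge_atTop 1
        filter_upwards [h1] with ℓ h2
        have h3 : ‖pf ℓ‖ ≠ 0 := by linarith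
        have h4 : ‖q ℓ‖ = 1 := by
          rw [hq, norm_smul, Real.norm_eq_abs, abs_inv, abs_of_nonneg (norm_nonneg _),
            inv_mul_cancel₀ h3]
        have h5 := hAcoer t (q ℓ)
        rw [h4] at h5
        simpa using h5
      have hδ0 : δ ≤ 0 := ge_of_tendsto hAqq hev
      linarith
  -- Part 2 : the main identity and the passage to the limit
  have hrA := rem_tendsto A t A' A'' hAder2 hseq hseq0 hseqlim huu φ
  have hrB := rem_tendsto B t B' B'' hBder2 hseq hseq0 hseqlim hιuu (ι φ)
  have hb1 : Filter.Tendsto (fun ℓ => B t (ι (u j (t + hseq ℓ))) (ι φ)) Filter.atTop (𝓝 1) := by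
    have h1 := bilin_tendsto (B t) CB (hBbdd t) hιuu
      (tendsto_const_nhds (x := ι φ) (f := Filter.atTop))
    rwa [hφnorm] at h1
  have hB'uu : Filter.Tendsto (fun ℓ => B' (ι (u j (t + hseq ℓ))) (ι φ)) Filter.atTop
      (𝓝 (B' (ι φ) (ι φ))) :=
    bilin_tendsto B' CB' hB'bdd hιuu (tendsto_const_nhds (x := ι φ) (f := Filter.atTop))
  have hA''uu : Filter.Tendsto (fun ℓ => A'' (u j (t + hseq ℓ)) φ) Filter.atTop
      (𝓝 (A'' φ φ)) :=
    bilin_tendsto A'' CA'' hA''bdd huu (tendsto_const_nhds (x := φ) (f := Filter.atTop))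
  have hB''uu : Filter.Tendsto (fun ℓ => B'' (ι (u j (t + hseq ℓ))) (ι φ)) Filter.atTop
      (𝓝 (B'' (ι φ) (ι φ))) :=
    bilin_tendsto B'' CB'' hB''bdd hιuu (tendsto_const_nhds (x := ι φ) (f := Filter.atTop))
  have hCzsym : A' zstar φ - lamdot * B t (ι zstar) (ι φ) - lam j t * B' (ι zstar) (ι φ)
      = -(A t zstar zstar - lam j t * B t (ι zstar) (ι zstar)) := by
    have h0 := hz zstar
    rw [hA's zstar φ, hBsymm t (ι zstar) (ι φ), hB's (ι zstar) (ι φ)]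
    linarith
  have hCwp : ∀ ℓ, A' ((hseq ℓ)⁻¹ • (u j (t + hseq ℓ) - φ)) φ
      - lamdot * B t (ι ((hseq ℓ)⁻¹ • (u j (t + hseq ℓ) - φ))) (ι φ)
      - lam j t * B' (ι ((hseq ℓ)⁻¹ • (u j (t + hseq ℓ) - φ))) (ι φ)
      = A' (P ((hseq ℓ)⁻¹ • (u j (t + hseq ℓ) - φ))) φ
        - lamdot * B t (ι (P ((hseq ℓ)⁻¹ • (u j (t + hseq ℓ) - φ)))) (ι φ)
        - lam j t * B' (ι (P ((hseq ℓ)⁻¹ • (u j (t + hseq ℓ) - φ)))) (ι φ) := by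
    intro ℓ
    have hy := hPY ((hseq ℓ)⁻¹ • (u j (t + hseq ℓ) - φ))
    have h0 := hCdotY0 _ hy
    simp only [map_sub, LinearMap.sub_apply] at h0
    linarith
  have hdecomp : ∀ ℓ, A' (u j (t + hseq ℓ)) φ - lamdot * B t (ι (u j (t + hseq ℓ))) (ι φ)
      - lam j t * B' (ι (u j (t + hseq ℓ))) (ι φ)
      = hseq ℓ * (A' (P ((hseq ℓ)⁻¹ • (u j (t + hseq ℓ) - φ))) φ
        - lamdot * B t (ι (P ((hseq ℓ)⁻¹ • (u j (t + hseq ℓ) - φ)))) (ι φ)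
        - lam j t * B' (ι (P ((hseq ℓ)⁻¹ • (u j (t + hseq ℓ) - φ)))) (ι φ)) := by
    intro ℓ
    have hne := hseq0 ℓ
    have eA : A' ((hseq ℓ)⁻¹ • (u j (t + hseq ℓ) - φ)) φ
        = (hseq ℓ)⁻¹ * (A' (u j (t + hseq ℓ)) φ - A' φ φ) := by
      rw [map_smul, map_sub]
      simp [LinearMap.sub_apply, smul_eq_mul]
    have eB : B t (ι ((hseq ℓ)⁻¹ • (u j (t + hseq ℓ) - φ))) (ι φ)
        = (hseq ℓ)⁻¹ * (B t (ι (u j (t + hseq ℓ))) (ι φ) - B t (ι φ) (ι φ)) := by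
      rw [map_smul, map_smul, map_sub, map_sub]
      simp [LinearMap.sub_apply, smul_eq_mul]
    have eB' : B' (ι ((hseq ℓ)⁻¹ • (u j (t + hseq ℓ) - φ))) (ι φ)
        = (hseq ℓ)⁻¹ * (B' (ι (u j (t + hseq ℓ))) (ι φ) - B' (ι φ) (ι φ)) := by
      rw [map_smul, map_smul, map_sub, map_sub]
      simp [LinearMap.sub_apply, smul_eq_mul]
    have e4 := hCwp ℓ
    rw [eA, eB, eB', hφnorm] at e4
    refine mul_left_cancel₀ (inv_ne_zero hne) ?_
    rw [inv_mul_cancel_left₀ hne]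
    rw [← e4]
    linear_combination (hseq ℓ)⁻¹ * hCdotphi
  have heigsub : ∀ ℓ, (lam j (t + hseq ℓ) - lam j t) * B t (ι (u j (t + hseq ℓ))) (ι φ)
      = (A (t + hseq ℓ) (u j (t + hseq ℓ)) φ - A t (u j (t + hseq ℓ)) φ)
        - lam j (t + hseq ℓ) * (B (t + hseq ℓ) (ι (u j (t + hseq ℓ))) (ι φ)
            - B t (ι (u j (t + hseq ℓ))) (ι φ)) := by
    intro ℓ
    have e1 := heig (t + hseq ℓ) φ
    have e2 : A t (u j (t + hseq ℓ)) φ = lam j t * B t (ι (u j (t + hseq ℓ))) (ι φ) := by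
      rw [hAsymm t, hYφ (u j (t + hseq ℓ)), hBsymm t]
    linear_combination e2 - e1
  have hMain : ∀ ℓ, 2 / hseq ℓ ^ 2 * (lam j (t + hseq ℓ) - lam j t - hseq ℓ * lamdot)
        * B t (ι (u j (t + hseq ℓ))) (ι φ)
      = 2 * (A' (P ((hseq ℓ)⁻¹ • (u j (t + hseq ℓ) - φ))) φ
          - lamdot * B t (ι (P ((hseq ℓ)⁻¹ • (u j (t + hseq ℓ) - φ)))) (ι φ)
          - lam j t * B' (ι (P ((hseq ℓ)⁻¹ • (u j (t + hseq ℓ) - φ)))) (ι φ))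
        - 2 * ((lam j (t + hseq ℓ) - lam j t) / hseq ℓ) * B' (ι (u j (t + hseq ℓ))) (ι φ)
        + (A'' (u j (t + hseq ℓ)) φ - lam j (t + hseq ℓ) * B'' (ι (u j (t + hseq ℓ))) (ι φ))
        + (2 * ((A (t + hseq ℓ) (u j (t + hseq ℓ)) φ - A t (u j (t + hseq ℓ)) φ
              - hseq ℓ * A' (u j (t + hseq ℓ)) φ - hseq ℓ ^ 2 / 2 * A'' (u j (t + hseq ℓ)) φ)
                / hseq ℓ ^ 2)
          - 2 * (lam j (t + hseq ℓ) * ((B (t + hseq ℓ) (ι (u j (t + hseq ℓ))) (ι φ)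
              - B t (ι (u j (t + hseq ℓ))) (ι φ) - hseq ℓ * B' (ι (u j (t + hseq ℓ))) (ι φ)
              - hseq ℓ ^ 2 / 2 * B'' (ι (u j (t + hseq ℓ))) (ι φ)) / hseq ℓ ^ 2))) := by
    intro ℓ
    have hne := hseq0 ℓ
    have hsq2 : hseq ℓ ^ 2 ≠ 0 := pow_ne_zero 2 hne
    have e1 := heigsub ℓ
    have e2 := hdecomp ℓ
    have G2 : 2 * (lam j (t + hseq ℓ) - lam j t - hseq ℓ * lamdot)
          * B t (ι (u j (t + hseq ℓ))) (ι φ)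
        = 2 * hseq ℓ ^ 2 * (A' (P ((hseq ℓ)⁻¹ • (u j (t + hseq ℓ) - φ))) φ
            - lamdot * B t (ι (P ((hseq ℓ)⁻¹ • (u j (t + hseq ℓ) - φ)))) (ι φ)
            - lam j t * B' (ι (P ((hseq ℓ)⁻¹ • (u j (t + hseq ℓ) - φ)))) (ι φ))
          - 2 * hseq ℓ * (lam j (t + hseq ℓ) - lam j t) * B' (ι (u j (t + hseq ℓ))) (ι φ)
          + hseq ℓ ^ 2 * (A'' (u j (t + hseq ℓ)) φ
              - lam j (t + hseq ℓ) * B'' (ι (u j (t + hseq ℓ))) (ι φ))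
          + 2 * (A (t + hseq ℓ) (u j (t + hseq ℓ)) φ - A t (u j (t + hseq ℓ)) φ
              - hseq ℓ * A' (u j (t + hseq ℓ)) φ - hseq ℓ ^ 2 / 2 * A'' (u j (t + hseq ℓ)) φ)
          - 2 * lam j (t + hseq ℓ) * (B (t + hseq ℓ) (ι (u j (t + hseq ℓ))) (ι φ)
              - B t (ι (u j (t + hseq ℓ))) (ι φ) - hseq ℓ * B' (ι (u j (t + hseq ℓ))) (ι φ)
              - hseq ℓ ^ 2 / 2 * B'' (ι (u j (t + hseq ℓ))) (ι φ)) := by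
      linear_combination 2 * e1 + 2 * hseq ℓ * e2
    calc 2 / hseq ℓ ^ 2 * (lam j (t + hseq ℓ) - lam j t - hseq ℓ * lamdot)
          * B t (ι (u j (t + hseq ℓ))) (ι φ)
        = 2 * (lam j (t + hseq ℓ) - lam j t - hseq ℓ * lamdot)
            * B t (ι (u j (t + hseq ℓ))) (ι φ) * (hseq ℓ ^ 2)⁻¹ := by ring
      _ = (2 * hseq ℓ ^ 2 * (A' (P ((hseq ℓ)⁻¹ • (u j (t + hseq ℓ) - φ))) φ
            - lamdot * B t (ι (P ((hseq ℓ)⁻¹ • (u j (t + hseq ℓ) - φ)))) (ι φ)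
            - lam j t * B' (ι (P ((hseq ℓ)⁻¹ • (u j (t + hseq ℓ) - φ)))) (ι φ))
          - 2 * hseq ℓ * (lam j (t + hseq ℓ) - lam j t) * B' (ι (u j (t + hseq ℓ))) (ι φ)
          + hseq ℓ ^ 2 * (A'' (u j (t + hseq ℓ)) φ
              - lam j (t + hseq ℓ) * B'' (ι (u j (t + hseq ℓ))) (ι φ))
          + 2 * (A (t + hseq ℓ) (u j (t + hseq ℓ)) φ - A t (u j (t + hseq ℓ)) φ
              - hseq ℓ * A' (u j (t + hseq ℓ)) φ - hseq ℓ ^ 2 / 2 * A'' (u j (t + hseq ℓ)) φ)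
          - 2 * lam j (t + hseq ℓ) * (B (t + hseq ℓ) (ι (u j (t + hseq ℓ))) (ι φ)
              - B t (ι (u j (t + hseq ℓ))) (ι φ) - hseq ℓ * B' (ι (u j (t + hseq ℓ))) (ι φ)
              - hseq ℓ ^ 2 / 2 * B'' (ι (u j (t + hseq ℓ))) (ι φ))) * (hseq ℓ ^ 2)⁻¹ := by
          rw [G2]
      _ = 2 * (A' (P ((hseq ℓ)⁻¹ • (u j (t + hseq ℓ) - φ))) φ
          - lamdot * B t (ι (P ((hseq ℓ)⁻¹ • (u j (t + hseq ℓ) - φ)))) (ι φ)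
          - lam j t * B' (ι (P ((hseq ℓ)⁻¹ • (u j (t + hseq ℓ) - φ)))) (ι φ))
        - 2 * ((lam j (t + hseq ℓ) - lam j t) / hseq ℓ) * B' (ι (u j (t + hseq ℓ))) (ι φ)
        + (A'' (u j (t + hseq ℓ)) φ - lam j (t + hseq ℓ) * B'' (ι (u j (t + hseq ℓ))) (ι φ))
        + (2 * ((A (t + hseq ℓ) (u j (t + hseq ℓ)) φ - A t (u j (t + hseq ℓ)) φ
              - hseq ℓ * A' (u j (t + hseq ℓ)) φ - hseq ℓ ^ 2 / 2 * A'' (u j (t + hseq ℓ)) φ)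
                / hseq ℓ ^ 2)
          - 2 * (lam j (t + hseq ℓ) * ((B (t + hseq ℓ) (ι (u j (t + hseq ℓ))) (ι φ)
              - B t (ι (u j (t + hseq ℓ))) (ι φ) - hseq ℓ * B' (ι (u j (t + hseq ℓ))) (ι φ)
              - hseq ℓ ^ 2 / 2 * B'' (ι (u j (t + hseq ℓ))) (ι φ)) / hseq ℓ ^ 2))) := by
          field_simp
          ring
    
  have T1 := hCpφ.const_mul (2:ℝ)
  have T2 := (hγ.const_mul (2:ℝ)).mul hB'uu
  have T3 := hA''uu.sub (hlm.mul hB''uu)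
  have T4 := (hrA.const_mul (2:ℝ)).sub ((hlm.mul hrB).const_mul (2:ℝ))
  have hsum := ((T1.sub T2).add T3).add T4
  have hveq : 2 * (A' zstar φ - lamdot * B t (ι zstar) (ι φ) - lam j t * B' (ι zstar) (ι φ))
        - 2 * lamdot * B' (ι φ) (ι φ) + (A'' φ φ - lam j t * B'' (ι φ) (ι φ))
        + (2 * 0 - 2 * (lam j t * 0))
      = A'' φ φ - lam j t * B'' (ι φ) (ι φ) - 2 * lamdot * B' (ι φ) (ι φ)
        - 2 * (A t zstar zstar - lam j t * B t (ι zstar) (ι zstar)) := by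
    rw [hCzsym]
    ring
  rw [hveq] at hsum
  have hμb : Filter.Tendsto (fun ℓ => 2 / hseq ℓ ^ 2
      * (lam j (t + hseq ℓ) - lam j t - hseq ℓ * lamdot)
      * B t (ι (u j (t + hseq ℓ))) (ι φ)) Filter.atTop
      (𝓝 (A'' φ φ - lam j t * B'' (ι φ) (ι φ) - 2 * lamdot * B' (ι φ) (ι φ)
        - 2 * (A t zstar zstar - lam j t * B t (ι zstar) (ι zstar)))) := by
    refine hsum.congr fun ℓ => ?_
    exact (hMain ℓ).symm
  have hbne : ∀ᶠ ℓ in Filter.atTop, B t (ι (u j (t + hseq ℓ))) (ι φ) ≠ 0 :=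
    hb1.eventually_ne one_ne_zero
  have hdiv := hμb.div hb1 one_ne_zero
  rw [div_one] at hdiv
  refine hdiv.congr' ?_
  filter_upwards [hbne] with ℓ h0
  simp only [Pi.div_apply]
  rw [mul_div_assoc, div_self h0, mul_one]
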